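/- For α > 0, real E > E_*(ℓ) and ℓ > −1/2, the function I(E,ℓ) = (1/π) ∫_{x₋}^{x₊} √(E − x^{2α} − (ℓ+1/2)²/x²) dx, where x₋ < x₊ are the two positive zeros of E − x^{2α} − (ℓ+1/2)²/x², is strictly increasing in E; consequently, for every n ∈ ℕ the Bohr–Sommerfeld equation I(E,ℓ) = n + 1/2 has exactly one solution E = Ê_n(ℓ) in (E_*(ℓ), ∞), provided I(E,ℓ) → ∞ as E → ∞ and I(E,ℓ) → 0 as E → E_*(ℓ)⁺. -/
import Mathlib


open Set Filter intervalIntegral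

/-- The critical energy `E_*(ℓ)`. -/
noncomputable def Estar12 (α ℓ : ℝ) : ℝ :=
  α ^ (-α / (1 + α)) * (1 + α) * (ℓ + 1/2) ^ (2 * α / (1 + α))

/-- The WKB action integral
`I(E,ℓ) = (1/π)∫_{x₋(E)}^{x₊(E)} √(E − x^{2α} − (ℓ+1/2)²/x²) dx`. -/
noncomputable def Ifun12 (α ℓ : ℝ) (xm xp : ℝ → ℝ) (E : ℝ) : ℝ :=
  (1 / Real.pi) * ∫ x in xm E..xp E, Real.sqrt (E - x ^ (2 * α) - (ℓ + 1/2) ^ 2 / x ^ 2)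

namespace BS12aux

variable {α ℓ : ℝ} {xm xp : ℝ → ℝ}

def Hroots (α ℓ : ℝ) (xm xp : ℝ → ℝ) : Prop := ∀ E : ℝ, Estar12 α ℓ < E →
      0 < xm E ∧ xm E < xp E ∧
      E - (xm E) ^ (2 * α) - (ℓ + 1/2) ^ 2 / (xm E) ^ 2 = 0 ∧
      E - (xp E) ^ (2 * α) - (ℓ + 1/2) ^ 2 / (xp E) ^ 2 = 0 ∧
      ∀ x : ℝ, 0 < x → E - x ^ (2 * α) - (ℓ + 1/2) ^ 2 / x ^ 2 = 0 →
        x = xm E ∨ x = xp E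


noncomputable def g (α ℓ E x : ℝ) : ℝ := E - x ^ (2 * α) - (ℓ + 1/2) ^ 2 / x ^ 2
noncomputable def f (α ℓ E x : ℝ) : ℝ := Real.sqrt (g α ℓ E x)

lemma g_contOn (α ℓ E : ℝ) : ContinuousOn (g α ℓ E) (Ioi 0) := by
  unfold g
  refine (continuousOn_const.sub ?_).sub ?_
  · exact ContinuousOn.rpow_const continuousOn_id (fun x hx => Or.inl (ne_of_gt hx))
  · exact continuousOn_const.div (continuousOn_pow 2) (fun x hx => pow_ne_zero 2 (ne_of_gt hx))

lemma f_contOn (α ℓ E : ℝ) : ContinuousOn (f α ℓ E) (Ioi 0) :=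
  (g_contOn α ℓ E).sqrt

lemma estar_pos {α ℓ : ℝ} (hα : 0 < α) (hℓ : -1/2 < ℓ) : 0 < Estar12 α ℓ := by
  have h1 : (0:ℝ) < ℓ + 1/2 := by linarith
  have h2 : (0:ℝ) < 1 + α := by linarith
  unfold Estar12
  exact mul_pos (mul_pos (Real.rpow_pos_of_pos hα _) h2) (Real.rpow_pos_of_pos h1 _)

lemma g_diff (α ℓ E E' x : ℝ) : g α ℓ E x - g α ℓ E' x = E - E' := by unfold g; ring

lemma exists_small {α ℓ : ℝ} (hα : 0 < α) (hℓ : -1/2 < ℓ) {E : ℝ} (hE : 0 < E) {b : ℝ}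
    (hb : 0 < b) : ∃ x, 0 < x ∧ x < b ∧ g α ℓ E x < 0 := by
  have hl1 : (0:ℝ) < ℓ + 1/2 := by linarith
  have hc : (0:ℝ) < (ℓ + 1/2) ^ 2 := by positivity
  set s := Real.sqrt ((ℓ + 1/2) ^ 2 / E) with hs
  have hspos : 0 < s := Real.sqrt_pos.2 (by positivity)
  refine ⟨min b s / 2, by positivity, ?_, ?_⟩
  · calc min b s / 2 ≤ b / 2 := by gcongr; exact min_le_left _ _
      _ < b := by linarith
  · set x := min b s / 2 with hx
    have hxpos : 0 < x := by positivity
    have hxs : x < s := by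
      have : min b s ≤ s := min_le_right _ _
      simp only [hx]; linarith
    have hx2 : x ^ 2 < (ℓ + 1/2) ^ 2 / E := by
      have := Real.sq_sqrt (by positivity : (0:ℝ) ≤ (ℓ + 1/2) ^ 2 / E)
      nlinarith
    have hdiv : E < (ℓ + 1/2) ^ 2 / x ^ 2 := by
      rw [lt_div_iff₀ (by positivity)]
      calc E * x ^ 2 = x ^ 2 * E := by ring
        _ < (ℓ + 1/2) ^ 2 := by
            have := (lt_div_iff₀ hE).1 hx2
            linarith
    have hr : (0:ℝ) ≤ x ^ (2 * α) := Real.rpow_nonneg hxpos.le _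
    unfold g; linarith

lemma exists_large {α ℓ : ℝ} (hα : 0 < α) (hℓ : -1/2 < ℓ) {E : ℝ} (hE : 0 < E) {b : ℝ}
    (hb : 0 < b) : ∃ x, b < x ∧ g α ℓ E x < 0 := by
  set x := max b (E ^ (1 / (2 * α))) + 1 with hx
  have h1 : b < x := by
    have : b ≤ max b (E ^ (1 / (2 * α))) := le_max_left _ _
    simp only [hx]; linarith
  have hxpos : 0 < x := lt_trans hb h1
  refine ⟨x, h1, ?_⟩
  have h2 : E ^ (1 / (2 * α)) < x := by
    have : E ^ (1 / (2 * α)) ≤ max b (E ^ (1 / (2 * α))) := le_max_right _ _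
    simp only [hx]; linarith
  have h3 : E < x ^ (2 * α) := by
    have hb0 : (0:ℝ) ≤ E ^ (1 / (2 * α)) := Real.rpow_nonneg hE.le _
    have := Real.rpow_lt_rpow hb0 h2 (by positivity : (0:ℝ) < 2 * α)
    rw [← Real.rpow_mul hE.le] at this
    have he : 1 / (2 * α) * (2 * α) = 1 := by field_simp
    rwa [he, Real.rpow_one] at this
  have hl1 : (0:ℝ) < ℓ + 1/2 := by linarith
  have hdivpos : 0 < (ℓ + 1/2) ^ 2 / x ^ 2 := div_pos (by positivity) (pow_pos hxpos 2)
  unfold g; linarith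



/-- structured root data -/
lemma g_neg_outside (hα : 0 < α) (hℓ : -1/2 < ℓ)
    (hroots : ∀ E : ℝ, Estar12 α ℓ < E →
      0 < xm E ∧ xm E < xp E ∧
      E - (xm E) ^ (2 * α) - (ℓ + 1/2) ^ 2 / (xm E) ^ 2 = 0 ∧
      E - (xp E) ^ (2 * α) - (ℓ + 1/2) ^ 2 / (xp E) ^ 2 = 0 ∧
      ∀ x : ℝ, 0 < x → E - x ^ (2 * α) - (ℓ + 1/2) ^ 2 / x ^ 2 = 0 →
        x = xm E ∨ x = xp E)
    {E : ℝ} (hE : Estar12 α ℓ < E) {x : ℝ} (hx : 0 < x)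
    (hout : x < xm E ∨ xp E < x) : g α ℓ E x < 0 := by
  obtain ⟨hm, hmp, hgm, hgp, huniq⟩ := hroots E hE
  have hEpos : 0 < E := lt_trans (estar_pos hα hℓ) hE
  rcases lt_trichotomy (g α ℓ E x) 0 with h | h | h
  · exact h
  · exfalso
    rcases huniq x hx h with rfl | rfl
    · rcases hout with h' | h'
      · exact lt_irrefl _ h'
      · exact absurd h' (not_lt.2 hmp.le)
    · rcases hout with h' | h'
      · exact absurd (lt_trans h' hmp) (lt_irrefl _)
      · exact lt_irrefl _ h'
  · exfalso
    rcases hout with h' | h'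
    · obtain ⟨x0, hx0pos, hx0lt, hx0neg⟩ := exists_small hα hℓ hEpos hx
      have hcont : ContinuousOn (g α ℓ E) (Icc x0 x) :=
        (g_contOn α ℓ E).mono (fun y hy => lt_of_lt_of_le hx0pos hy.1)
      have : (0:ℝ) ∈ Ioo (g α ℓ E x0) (g α ℓ E x) := ⟨hx0neg, h⟩
      obtain ⟨z, hz, hgz⟩ := intermediate_value_Ioo hx0lt.le hcont this
      have hzpos : 0 < z := lt_trans hx0pos hz.1
      rcases huniq z hzpos hgz with rfl | rfl
      · exact absurd (lt_trans hz.2 h') (lt_irrefl _)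
      · exact absurd (lt_trans (lt_trans hz.2 h') hmp) (lt_irrefl _)
    · obtain ⟨x1, hx1gt, hx1neg⟩ := exists_large hα hℓ hEpos hx
      have hcont : ContinuousOn (g α ℓ E) (Icc x x1) :=
        (g_contOn α ℓ E).mono (fun y hy => lt_of_lt_of_le hx hy.1)
      have : (0:ℝ) ∈ Ioo (g α ℓ E x1) (g α ℓ E x) := ⟨hx1neg, h⟩
      obtain ⟨z, hz, hgz⟩ := intermediate_value_Ioo' hx1gt.le hcont this
      have hzpos : 0 < z := lt_trans hx hz.1
      rcases huniq z hzpos hgz with rfl | rfl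
      · exact absurd (lt_trans hmp (lt_trans h' hz.1)) (lt_irrefl _)
      · exact absurd (lt_trans h' hz.1) (lt_irrefl _)



lemma g_shift (α ℓ E E' x : ℝ) : g α ℓ E x = g α ℓ E' x + (E - E') := by unfold g; ring

lemma nesting (hα : 0 < α) (hℓ : -1/2 < ℓ) (hroots : Hroots α ℓ xm xp)
    {E1 E2 : ℝ} (hE1 : Estar12 α ℓ < E1) (h12 : E1 < E2) :
    xm E2 < xm E1 ∧ xp E1 < xp E2 := by
  have hE2 : Estar12 α ℓ < E2 := lt_trans hE1 h12
  obtain ⟨hm1, hmp1, hgm1, hgp1, _⟩ := hroots E1 hE1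
  obtain ⟨hm2, hmp2, hgm2, hgp2, _⟩ := hroots E2 hE2
  have hgm1' : g α ℓ E1 (xm E1) = 0 := hgm1
  have hgp1' : g α ℓ E1 (xp E1) = 0 := hgp1
  have h2m : 0 < g α ℓ E2 (xm E1) := by
    rw [g_shift α ℓ E2 E1, hgm1']; linarith
  have h2p : 0 < g α ℓ E2 (xp E1) := by
    rw [g_shift α ℓ E2 E1, hgp1']; linarith
  have hp1pos : 0 < xp E1 := lt_trans hm1 hmp1
  have hmle : xm E2 ≤ xm E1 := by
    by_contra h
    push_neg at h
    exact absurd (g_neg_outside hα hℓ hroots hE2 hm1 (Or.inl h)) (not_lt.2 h2m.le)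
  have hple : xp E1 ≤ xp E2 := by
    by_contra h
    push_neg at h
    exact absurd (g_neg_outside hα hℓ hroots hE2 hp1pos (Or.inr h)) (not_lt.2 h2p.le)
  constructor
  · rcases eq_or_lt_of_le hmle with h | h
    · exfalso
      have : g α ℓ E2 (xm E2) = 0 := hgm2
      rw [h] at this; rw [this] at h2m; exact lt_irrefl _ h2m
    · exact h
  · rcases eq_or_lt_of_le hple with h | h
    · exfalso
      have : g α ℓ E2 (xp E2) = 0 := hgp2
      rw [← h] at this; rw [this] at h2p; exact lt_irrefl _ h2p
    · exact h

lemma f_eq_zero_outside (hα : 0 < α) (hℓ : -1/2 < ℓ) (hroots : Hroots α ℓ xm xp)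
    {E : ℝ} (hE : Estar12 α ℓ < E) {x : ℝ} (hx : 0 < x)
    (hout : x ≤ xm E ∨ xp E ≤ x) : f α ℓ E x = 0 := by
  obtain ⟨hm, hmp, hgm, hgp, _⟩ := hroots E hE
  unfold f
  rw [Real.sqrt_eq_zero']
  rcases hout with h | h
  · rcases eq_or_lt_of_le h with rfl | h'
    · exact le_of_eq hgm
    · exact (g_neg_outside hα hℓ hroots hE hx (Or.inl h')).le
  · rcases eq_or_lt_of_le h with rfl | h'
    · exact le_of_eq (hgp : g α ℓ E (xp E) = 0)
    · exact (g_neg_outside hα hℓ hroots hE hx (Or.inr h')).le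

lemma integral_ext (hα : 0 < α) (hℓ : -1/2 < ℓ) (hroots : Hroots α ℓ xm xp)
    {E : ℝ} (hE : Estar12 α ℓ < E) {a b : ℝ} (ha : 0 < a) (ham : a ≤ xm E)
    (hpb : xp E ≤ b) :
    ∫ x in xm E..xp E, f α ℓ E x = ∫ x in a..b, f α ℓ E x := by
  obtain ⟨hm, hmp, _, _, _⟩ := hroots E hE
  have hsub : Icc a b ⊆ Ioi 0 := fun y hy => lt_of_lt_of_le ha hy.1
  have hab : a ≤ b := le_trans ham (le_trans (le_of_lt hmp) hpb)
  have hcont : ContinuousOn (f α ℓ E) (Icc a b) := (f_contOn α ℓ E).mono hsub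
  have hint : IntervalIntegrable (f α ℓ E) MeasureTheory.volume a b :=
    hcont.intervalIntegrable_of_Icc hab
  have h1 : IntervalIntegrable (f α ℓ E) MeasureTheory.volume a (xm E) :=
    hint.mono_set (by rw [uIcc_of_le hab, uIcc_of_le ham]; exact Icc_subset_Icc le_rfl (le_trans hmp.le hpb))
  have h2 : IntervalIntegrable (f α ℓ E) MeasureTheory.volume (xm E) (xp E) :=
    hint.mono_set (by rw [uIcc_of_le hab, uIcc_of_le hmp.le]; exact Icc_subset_Icc ham hpb)
  have h3 : IntervalIntegrable (f α ℓ E) MeasureTheory.volume (xp E) b :=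
    hint.mono_set (by rw [uIcc_of_le hab, uIcc_of_le hpb]; exact Icc_subset_Icc (le_trans ham hmp.le) le_rfl)
  have z1 : ∫ x in a..xm E, f α ℓ E x = 0 := by
    rw [show (0:ℝ) = ∫ _ in a..xm E, (0:ℝ) by simp]
    apply intervalIntegral.integral_congr
    intro y hy
    rw [uIcc_of_le ham] at hy
    exact f_eq_zero_outside hα hℓ hroots hE (lt_of_lt_of_le ha hy.1) (Or.inl hy.2)
  have z3 : ∫ x in xp E..b, f α ℓ E x = 0 := by
    rw [show (0:ℝ) = ∫ _ in xp E..b, (0:ℝ) by simp]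
    apply intervalIntegral.integral_congr
    intro y hy
    rw [uIcc_of_le hpb] at hy
    exact f_eq_zero_outside hα hℓ hroots hE (lt_of_lt_of_le ha (le_trans ham (le_trans hmp.le hy.1))) (Or.inr hy.1)
  have key : ∫ x in a..b, f α ℓ E x =
      (∫ x in a..xm E, f α ℓ E x) + (∫ x in xm E..xp E, f α ℓ E x) + (∫ x in xp E..b, f α ℓ E x) := by
    rw [intervalIntegral.integral_add_adjacent_intervals h1 h2,
        intervalIntegral.integral_add_adjacent_intervals (h1.trans h2) h3]
  rw [key, z1, z3]; ring




/-- pointwise monotonicity in E -/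
lemma f_le_f (α ℓ : ℝ) {E1 E2 : ℝ} (h : E1 ≤ E2) (x : ℝ) : f α ℓ E1 x ≤ f α ℓ E2 x := by
  apply Real.sqrt_le_sqrt
  rw [g_shift α ℓ E2 E1]; linarith

lemma strictmono (hα : 0 < α) (hℓ : -1/2 < ℓ) (hroots : Hroots α ℓ xm xp)
    {E1 E2 : ℝ} (hE1 : Estar12 α ℓ < E1) (h12 : E1 < E2) :
    ∫ x in xm E1..xp E1, f α ℓ E1 x < ∫ x in xm E2..xp E2, f α ℓ E2 x := by
  have hE2 : Estar12 α ℓ < E2 := lt_trans hE1 h12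
  obtain ⟨hm1, hmp1, hgm1, _, _⟩ := hroots E1 hE1
  obtain ⟨hm2, hmp2, _, _, _⟩ := hroots E2 hE2
  obtain ⟨hnm, hnp⟩ := nesting hα hℓ hroots hE1 h12
  have hg1 : g α ℓ E1 (xm E1) = 0 := hgm1
  have hsub1 : Icc (xm E1) (xp E1) ⊆ Ioi 0 := fun y hy => lt_of_lt_of_le hm1 hy.1
  have step1 : ∫ x in xm E1..xp E1, f α ℓ E1 x < ∫ x in xm E1..xp E1, f α ℓ E2 x := by
    apply intervalIntegral.integral_lt_integral_of_continuousOn_of_le_of_exists_lt hmp1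
      ((f_contOn α ℓ E1).mono hsub1) ((f_contOn α ℓ E2).mono hsub1)
      (fun x _ => f_le_f α ℓ h12.le x)
    refine ⟨xm E1, ⟨le_rfl, hmp1.le⟩, ?_⟩
    have h1 : f α ℓ E1 (xm E1) = 0 := by
      unfold f; rw [hg1, Real.sqrt_zero]
    have h2 : 0 < f α ℓ E2 (xm E1) := by
      unfold f
      apply Real.sqrt_pos.2
      rw [g_shift α ℓ E2 E1, hg1]; linarith
    rw [h1]; exact h2
  have step2 : ∫ x in xm E1..xp E1, f α ℓ E2 x ≤ ∫ x in xm E2..xp E2, f α ℓ E2 x := by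
    apply intervalIntegral.integral_mono_interval hnm.le hmp1.le hnp.le
    · filter_upwards with x using Real.sqrt_nonneg _
    · exact ((f_contOn α ℓ E2).mono (fun y hy => lt_of_lt_of_le hm2 hy.1)).intervalIntegrable_of_Icc hmp2.le
  linarith

/-- |√u − √v| ≤ √|u−v| -/
lemma sqrt_abs_sub (u v : ℝ) : |Real.sqrt u - Real.sqrt v| ≤ Real.sqrt |u - v| := by
  have key : ∀ a b : ℝ, b ≤ a → Real.sqrt a - Real.sqrt b ≤ Real.sqrt (a - b) := by
    intro a b hba
    rcases le_or_gt a 0 with ha | ha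
    · rw [Real.sqrt_eq_zero_of_nonpos ha]
      have := Real.sqrt_nonneg b
      have := Real.sqrt_nonneg (a - b)
      linarith
    · have hsum : Real.sqrt a ≤ Real.sqrt b + Real.sqrt (a - b) := by
        rcases le_or_gt b 0 with hb | hb
        · rw [Real.sqrt_eq_zero_of_nonpos hb]
          have : Real.sqrt a ≤ Real.sqrt (a - b) := Real.sqrt_le_sqrt (by linarith)
          linarith
        · have h1 := Real.sq_sqrt hb.le
          have h2 := Real.sq_sqrt (by linarith : (0:ℝ) ≤ a - b)
          have h3 := Real.sqrt_nonneg b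
          have h4 := Real.sqrt_nonneg (a - b)
          have : a ≤ (Real.sqrt b + Real.sqrt (a - b)) ^ 2 := by nlinarith
          calc Real.sqrt a ≤ Real.sqrt ((Real.sqrt b + Real.sqrt (a - b)) ^ 2) :=
                Real.sqrt_le_sqrt this
            _ = Real.sqrt b + Real.sqrt (a - b) := Real.sqrt_sq (by linarith)
      linarith
  rcases le_total v u with h | h
  · rw [abs_of_nonneg (by linarith [Real.sqrt_le_sqrt h] : (0:ℝ) ≤ Real.sqrt u - Real.sqrt v),
        abs_of_nonneg (by linarith : (0:ℝ) ≤ u - v)]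
    exact key u v h
  · rw [abs_of_nonpos (by linarith [Real.sqrt_le_sqrt h] : Real.sqrt u - Real.sqrt v ≤ 0),
        abs_of_nonpos (by linarith : u - v ≤ 0), neg_sub, neg_sub]
    exact key v u h

/-- continuity of the fixed-interval integral in E -/
lemma J_bound (α ℓ : ℝ) {a b : ℝ} (ha : 0 < a) (hab : a ≤ b) (E E' : ℝ) :
    |(∫ x in a..b, f α ℓ E x) - ∫ x in a..b, f α ℓ E' x| ≤ Real.sqrt |E - E'| * |b - a| := by
  have hsub : Icc a b ⊆ Ioi 0 := fun y hy => lt_of_lt_of_le ha hy.1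
  have hi1 : IntervalIntegrable (f α ℓ E) MeasureTheory.volume a b :=
    ((f_contOn α ℓ E).mono hsub).intervalIntegrable_of_Icc hab
  have hi2 : IntervalIntegrable (f α ℓ E') MeasureTheory.volume a b :=
    ((f_contOn α ℓ E').mono hsub).intervalIntegrable_of_Icc hab
  rw [← intervalIntegral.integral_sub hi1 hi2]
  have := intervalIntegral.norm_integral_le_of_norm_le_const
    (f := fun x => f α ℓ E x - f α ℓ E' x) (a := a) (b := b) (C := Real.sqrt |E - E'|) ?_
  · simpa [Real.norm_eq_abs] using this
  · intro x _
    rw [Real.norm_eq_abs]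
    have h := sqrt_abs_sub (g α ℓ E x) (g α ℓ E' x)
    have h2 : g α ℓ E x - g α ℓ E' x = E - E' := by rw [g_shift α ℓ E E' x]; ring
    rw [h2] at h
    exact h

lemma J_cont (α ℓ : ℝ) {a b : ℝ} (ha : 0 < a) (hab : a ≤ b) :
    Continuous (fun E => ∫ x in a..b, f α ℓ E x) := by
  rw [continuous_iff_continuousAt]
  intro E0
  rw [ContinuousAt, tendsto_iff_dist_tendsto_zero]
  apply squeeze_zero (fun E => dist_nonneg)
    (g := fun E => Real.sqrt |E - E0| * |b - a|)
  · intro E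
    rw [Real.dist_eq]
    exact J_bound α ℓ ha hab E E0
  · have hc : Continuous (fun E : ℝ => Real.sqrt |E - E0| * |b - a|) := by
      continuity
    have := hc.tendsto E0
    simpa using this



lemma Ifun_eq (α ℓ : ℝ) (xm xp : ℝ → ℝ) (E : ℝ) :
    Ifun12 α ℓ xm xp E = (1 / Real.pi) * ∫ x in xm E..xp E, f α ℓ E x := rfl

lemma I_contAt (hα : 0 < α) (hℓ : -1/2 < ℓ) (hroots : Hroots α ℓ xm xp)
    {E0 : ℝ} (hE0 : Estar12 α ℓ < E0) :
    ContinuousAt (Ifun12 α ℓ xm xp) E0 := by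
  set B := E0 + 1 with hB
  have hBgt : Estar12 α ℓ < B := by linarith
  obtain ⟨hmB, hmpB, _, _, _⟩ := hroots B hBgt
  have hJ : ContinuousAt (fun E => (1 / Real.pi) * ∫ x in xm B..xp B, f α ℓ E x) E0 :=
    (continuous_const.mul (J_cont α ℓ hmB hmpB.le)).continuousAt
  apply hJ.congr
  have hmem : Ioo (Estar12 α ℓ) B ∈ nhds E0 := Ioo_mem_nhds hE0 (by linarith)
  filter_upwards [hmem] with E hE
  obtain ⟨hnm, hnp⟩ := nesting hα hℓ hroots hE.1 hE.2
  rw [Ifun_eq, integral_ext hα hℓ hroots hE.1 hmB hnm.le hnp.le]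


end BS12aux

open BS12aux in
/-- The WKB integral `I(·,ℓ)` is strictly increasing on `(E_*,∞)`; consequently, if
`I → ∞` as `E → ∞` and `I → 0` as `E → E_*⁺`, then for every `n ∈ ℕ` the
Bohr–Sommerfeld equation `I(E,ℓ) = n + 1/2` has exactly one solution in `(E_*,∞)`. -/
theorem stmt12 (α ℓ : ℝ) (hα : 0 < α) (hℓ : -1/2 < ℓ)
    (xm xp : ℝ → ℝ)
    (hroots : ∀ E : ℝ, Estar12 α ℓ < E →
      0 < xm E ∧ xm E < xp E ∧
      E - (xm E) ^ (2 * α) - (ℓ + 1/2) ^ 2 / (xm E) ^ 2 = 0 ∧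
      E - (xp E) ^ (2 * α) - (ℓ + 1/2) ^ 2 / (xp E) ^ 2 = 0 ∧
      ∀ x : ℝ, 0 < x → E - x ^ (2 * α) - (ℓ + 1/2) ^ 2 / x ^ 2 = 0 →
        x = xm E ∨ x = xp E) :
    StrictMonoOn (Ifun12 α ℓ xm xp) (Ioi (Estar12 α ℓ)) ∧
    (Tendsto (Ifun12 α ℓ xm xp) atTop atTop →
     Tendsto (Ifun12 α ℓ xm xp) (nhdsWithin (Estar12 α ℓ) (Ioi (Estar12 α ℓ))) (nhds 0) →
     ∀ n : ℕ, ∃! E : ℝ, E ∈ Ioi (Estar12 α ℓ) ∧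
       Ifun12 α ℓ xm xp E = (n : ℝ) + 1/2) := by
  have hroots' : Hroots α ℓ xm xp := hroots
  have hπ : (0:ℝ) < 1 / Real.pi := by positivity
  have hSM : StrictMonoOn (Ifun12 α ℓ xm xp) (Ioi (Estar12 α ℓ)) := by
    intro E1 h1 E2 _ h12
    rw [Ifun_eq, Ifun_eq]
    exact mul_lt_mul_of_pos_left (strictmono hα hℓ hroots' h1 h12) hπ
  refine ⟨hSM, fun hTop h0 n => ?_⟩
  set y : ℝ := (n : ℝ) + 1/2 with hy
  have hypos : 0 < y := by positivity
  -- find Ea with I Ea < y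
  have hev1 : ∀ᶠ E in nhdsWithin (Estar12 α ℓ) (Ioi (Estar12 α ℓ)),
      Ifun12 α ℓ xm xp E < y := h0.eventually (Iio_mem_nhds hypos)
  have hev2 : ∀ᶠ E in nhdsWithin (Estar12 α ℓ) (Ioi (Estar12 α ℓ)),
      E ∈ Ioi (Estar12 α ℓ) := self_mem_nhdsWithin
  obtain ⟨Ea, hIa, hEa⟩ := (hev1.and hev2).exists
  -- find Eb > Ea with I Eb > y
  obtain ⟨Eb, hIb, hab⟩ := ((hTop.eventually_gt_atTop y).and (eventually_gt_atTop Ea)).exists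
  have hEb : Eb ∈ Ioi (Estar12 α ℓ) := lt_trans hEa hab
  have hcont : ContinuousOn (Ifun12 α ℓ xm xp) (Icc Ea Eb) := by
    intro E hE
    exact (I_contAt hα hℓ hroots' (lt_of_lt_of_le hEa hE.1)).continuousWithinAt
  have hivt := intermediate_value_Icc hab.le hcont
  have hymem : y ∈ Icc (Ifun12 α ℓ xm xp Ea) (Ifun12 α ℓ xm xp Eb) := ⟨hIa.le, hIb.le⟩
  obtain ⟨E, hEmem, hIE⟩ := hivt hymem
  have hEIoi : E ∈ Ioi (Estar12 α ℓ) := lt_of_lt_of_le hEa hEmem.1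
  refine ⟨E, ⟨hEIoi, hIE⟩, ?_⟩
  rintro E' ⟨hE', hIE'⟩
  exact hSM.injOn hE' hEIoi (by rw [hIE, hIE'])
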